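/- For any square-summable sequence φ: ℤ → ℂ, the squared supremum norm satisfies ‖φ‖_{ℓ∞(ℤ)}² ≤ ‖φ‖_{ℓ²(ℤ)} · ‖Dφ‖_{ℓ²(ℤ)}, where (Dφ)(n) = φ(n+1) − φ(n). -/

import Mathlib

open Finset in
/-- Cauchy–Schwarz for tsums of nonnegative reals. -/
lemma tsum_mul_le_sqrt_mul_sqrt_aux {a b : ℤ → ℝ} (ha : ∀ i, 0 ≤ a i) (hb : ∀ i, 0 ≤ b i)
    (ha2 : Summable fun i => a i ^ 2) (hb2 : Summable fun i => b i ^ 2) :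
    Summable (fun i => a i * b i) ∧
      ∑' i, a i * b i ≤ Real.sqrt (∑' i, a i ^ 2) * Real.sqrt (∑' i, b i ^ 2) := by
  have hsum : Summable (fun i => a i * b i) := by
    apply Summable.of_nonneg_of_le (fun i => mul_nonneg (ha i) (hb i))
      (fun i => ?_) (ha2.add hb2)
    nlinarith [sq_nonneg (a i - b i)]
  refine ⟨hsum, hsum.tsum_le_of_sum_le fun s => ?_⟩
  calc ∑ i ∈ s, a i * b i
      ≤ Real.sqrt (∑ i ∈ s, a i ^ 2) * Real.sqrt (∑ i ∈ s, b i ^ 2) :=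
        Real.sum_mul_le_sqrt_mul_sqrt s a b
    _ ≤ Real.sqrt (∑' i, a i ^ 2) * Real.sqrt (∑' i, b i ^ 2) := by
        exact mul_le_mul (Real.sqrt_le_sqrt (Summable.sum_le_tsum s (fun i _ => sq_nonneg _) ha2))
          (Real.sqrt_le_sqrt (Summable.sum_le_tsum s (fun i _ => sq_nonneg _) hb2))
          (Real.sqrt_nonneg _) (Real.sqrt_nonneg _)

/-- Discrete Agmon inequality on ℤ. -/
theorem discrete_agmon (φ : ℤ → ℂ) (h : Summable fun n => ‖φ n‖ ^ 2) :
    (⨆ n : ℤ, ‖φ n‖) ^ 2 ≤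
      Real.sqrt (∑' n : ℤ, ‖φ n‖ ^ 2) *
        Real.sqrt (∑' n : ℤ, ‖φ (n + 1) - φ n‖ ^ 2) := by
  classical
  set f : ℤ → ℝ := fun k => ‖φ k‖ ^ 2 with hfdef
  set g : ℤ → ℝ := fun k => ‖φ (k + 1) - φ k‖ with hgdef
  set A : ℝ := Real.sqrt (∑' n : ℤ, ‖φ n‖ ^ 2) with hA
  set B : ℝ := Real.sqrt (∑' n : ℤ, ‖φ (n + 1) - φ n‖ ^ 2) with hB
  have hshift : Summable (fun k : ℤ => ‖φ (k + 1)‖ ^ 2) :=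
    h.comp_injective (add_left_injective (1 : ℤ))
  have hg2 : Summable (fun k : ℤ => g k ^ 2) := by
    apply Summable.of_nonneg_of_le (fun k => sq_nonneg _) (fun k => ?_)
      ((hshift.mul_left 2).add (h.mul_left 2))
    have h1 : ‖φ (k + 1) - φ k‖ ≤ ‖φ (k + 1)‖ + ‖φ k‖ := norm_sub_le _ _
    simp only [hgdef, hfdef]
    nlinarith [norm_nonneg (φ (k + 1) - φ k), norm_nonneg (φ (k + 1)), norm_nonneg (φ k),
      sq_nonneg (‖φ (k + 1)‖ - ‖φ k‖)]
  have habs : ∀ k : ℤ, |f (k + 1) - f k| ≤ ‖φ (k + 1)‖ * g k + ‖φ k‖ * g k := by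
    intro k
    have h1 : |‖φ (k + 1)‖ - ‖φ k‖| ≤ g k := abs_norm_sub_norm_le _ _
    have h2 : f (k + 1) - f k = (‖φ (k + 1)‖ - ‖φ k‖) * (‖φ (k + 1)‖ + ‖φ k‖) := by
      simp only [hfdef]; ring
    rw [h2, abs_mul, abs_of_nonneg (by positivity : (0:ℝ) ≤ ‖φ (k + 1)‖ + ‖φ k‖)]
    have h3 : (0:ℝ) ≤ g k := norm_nonneg _
    nlinarith [abs_nonneg (‖φ (k + 1)‖ - ‖φ k‖), norm_nonneg (φ (k + 1)), norm_nonneg (φ k)]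
  have hCS1 := tsum_mul_le_sqrt_mul_sqrt_aux (a := fun k => ‖φ (k + 1)‖) (b := g)
    (fun i => norm_nonneg _) (fun i => norm_nonneg _) hshift hg2
  have hCS2 := tsum_mul_le_sqrt_mul_sqrt_aux (a := fun k => ‖φ k‖) (b := g)
    (fun i => norm_nonneg _) (fun i => norm_nonneg _) h hg2
  have hshiftsum : (∑' k : ℤ, ‖φ (k + 1)‖ ^ 2) = ∑' k : ℤ, ‖φ k‖ ^ 2 :=
    (Equiv.addRight (1 : ℤ)).tsum_eq (fun k => ‖φ k‖ ^ 2)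
  have hΔsummable : Summable (fun k : ℤ => |f (k + 1) - f k|) :=
    Summable.of_nonneg_of_le (fun k => abs_nonneg _) habs (hCS1.1.add hCS2.1)
  set T : ℝ := ∑' k : ℤ, |f (k + 1) - f k| with hT
  have hTle : T ≤ 2 * (A * B) := by
    calc T ≤ ∑' k : ℤ, (‖φ (k + 1)‖ * g k + ‖φ k‖ * g k) :=
          Summable.tsum_le_tsum habs hΔsummable (hCS1.1.add hCS2.1)
      _ = (∑' k : ℤ, ‖φ (k + 1)‖ * g k) + ∑' k : ℤ, ‖φ k‖ * g k :=
          Summable.tsum_add hCS1.1 hCS2.1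
      _ ≤ A * B + A * B := by
          refine add_le_add (hCS1.2.trans ?_) hCS2.2
          rw [hshiftsum]
      _ = 2 * (A * B) := by ring
  -- telescoping identity
  have tel : ∀ (a : ℤ) (d : ℕ), f (a + d) - f a =
      ∑ i ∈ Finset.range d, (f (a + i + 1) - f (a + i)) := by
    intro a d
    induction d with
    | zero => simp
    | succ d ih =>
      rw [Finset.sum_range_succ, ← ih,
        show a + ((d + 1 : ℕ) : ℤ) = a + (d : ℤ) + 1 by push_cast; ring]
      ring
  -- key pointwise bound : f n ≤ A * B
  have hkey : ∀ n : ℤ, f n ≤ A * B := by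
    intro n
    have h2fn : 2 * f n ≤ T := by
      by_contra hcon
      push_neg at hcon
      set ε : ℝ := (2 * f n - T) / 2 with hε
      have hεpos : 0 < ε := by simp only [hε]; linarith
      have hev : ∀ᶠ k in Filter.cofinite, f k < ε :=
        h.tendsto_cofinite_zero.eventually (gt_mem_nhds hεpos)
      have hfin : {k : ℤ | ¬ f k < ε}.Finite := hev
      obtain ⟨lo, hlo⟩ := hfin.bddBelow
      obtain ⟨hi, hhi⟩ := hfin.bddAbove
      set m : ℤ := min (lo - 1) (n - 1) with hm
      set N : ℤ := max (hi + 1) n with hN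
      have hmn : m ≤ n := by omega
      have hnN : n ≤ N := by omega
      have hfm : f m < ε := by
        by_contra hc
        have : lo ≤ m := hlo (by simpa using hc)
        omega
      have hfN : f N < ε := by
        by_contra hc
        have : N ≤ hi := hhi (by simpa using hc)
        omega
      set d1 : ℕ := (n - m).toNat with hd1def
      set d2 : ℕ := (N - n).toNat with hd2def
      have hd1 : ((d1 : ℤ)) = n - m := Int.toNat_of_nonneg (by omega)
      have hd2 : ((d2 : ℤ)) = N - n := Int.toNat_of_nonneg (by omega)
      have e1 : f n - f m = ∑ i ∈ Finset.range d1, (f (m + i + 1) - f (m + i)) := by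
        have := tel m d1
        rw [hd1, show m + (n - m) = n by ring] at this
        exact this
      have e2 : f N - f n = ∑ i ∈ Finset.range d2, (f (n + i + 1) - f (n + i)) := by
        have := tel n d2
        rw [hd2, show n + (N - n) = N by ring] at this
        exact this
      set em : ℕ ↪ ℤ := ⟨fun i => m + i, fun i j hij => by simpa using hij⟩ with hem
      set en : ℕ ↪ ℤ := ⟨fun i => n + i, fun i j hij => by simpa using hij⟩ with hen
      set s1 : Finset ℤ := (Finset.range d1).map em with hs1
      set s2 : Finset ℤ := (Finset.range d2).map en with hs2
      have hdisj : Disjoint s1 s2 := by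
        rw [Finset.disjoint_left]
        rintro x hx1 hx2
        simp only [hs1, hs2, Finset.mem_map, Finset.mem_range, hem, hen,
          Function.Embedding.coeFn_mk] at hx1 hx2
        obtain ⟨i, hi, rfl⟩ := hx1
        obtain ⟨j, hj, hij⟩ := hx2
        change n + (j : ℤ) = m + (i : ℤ) at hij
        omega
      have b1 : f n - f m ≤ ∑ k ∈ s1, |f (k + 1) - f k| := by
        calc f n - f m = ∑ i ∈ Finset.range d1, (f (m + i + 1) - f (m + i)) := e1
          _ ≤ ∑ i ∈ Finset.range d1, |f (m + i + 1) - f (m + i)| :=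
              Finset.sum_le_sum fun i _ => le_abs_self _
          _ = ∑ k ∈ s1, |f (k + 1) - f k| := by
              rw [hs1, Finset.sum_map]; rfl
      have b2 : f n - f N ≤ ∑ k ∈ s2, |f (k + 1) - f k| := by
        calc f n - f N ≤ |f N - f n| := by rw [abs_sub_comm]; exact le_abs_self _
          _ = |∑ i ∈ Finset.range d2, (f (n + i + 1) - f (n + i))| := by rw [e2]
          _ ≤ ∑ i ∈ Finset.range d2, |f (n + i + 1) - f (n + i)| :=
              Finset.abs_sum_le_sum_abs _ _
          _ = ∑ k ∈ s2, |f (k + 1) - f k| := by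
              rw [hs2, Finset.sum_map]; rfl
      have hunion : (∑ k ∈ s1, |f (k + 1) - f k|) + ∑ k ∈ s2, |f (k + 1) - f k| ≤ T := by
        rw [← Finset.sum_union hdisj]
        exact Summable.sum_le_tsum _ (fun k _ => abs_nonneg _) hΔsummable
      linarith
    have hfn : f n ≤ T / 2 := by linarith
    linarith
  -- conclude
  have hABnn : 0 ≤ A * B := mul_nonneg (Real.sqrt_nonneg _) (Real.sqrt_nonneg _)
  have hsup : (⨆ n : ℤ, ‖φ n‖) ≤ Real.sqrt (A * B) :=
    Real.iSup_le (fun n => Real.le_sqrt_of_sq_le (hkey n)) (Real.sqrt_nonneg _)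
  have hsupnn : 0 ≤ ⨆ n : ℤ, ‖φ n‖ := Real.iSup_nonneg fun n => norm_nonneg _
  calc (⨆ n : ℤ, ‖φ n‖) ^ 2 ≤ Real.sqrt (A * B) ^ 2 := by gcongr
    _ = A * B := Real.sq_sqrt hABnn
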